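/- Let K be an algebraically closed field of characteristic 0, let n ≥ 2 and d ≥ 4, and set r = ⌈(d+2)/2⌉ + 1. If S is a set of r distinct points of ℙ^n such that no r − 1 points of S are collinear, then the double points 2S impose independent conditions on degree-d forms: the subspace of degree-d forms in x_0,…,x_n whose first-order partial derivatives all vanish at every point of S has dimension exactly binom(n+d, n) − r(n+1). (Equivalently, ν_d(S) ∉ Ter_r(V_n^d).) -/

import Mathlib

set_option maxHeartbeats 1000000
open MvPolynomial Module Submodule

variable {K : Type} [Field K] {m : ℕ}

def dotP (w x : Fin m → K) : K := ∑ i, w i * x i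

noncomputable def linF (w : Fin m → K) : MvPolynomial (Fin m) K := ∑ i, C (w i) * X i

lemma aeval_linF (x w : Fin m → K) : aeval x (linF w) = dotP w x := by
  simp [linF, dotP]

lemma pderiv_linF (j : Fin m) (w : Fin m → K) : pderiv j (linF w) = C (w j) := by
  simp only [linF, map_sum]
  rw [Finset.sum_eq_single j]
  · simp
  · intro i _ hij; simp [pderiv_X, Pi.single_apply, hij.symm]
  · simp

lemma isHomogeneous_linF (w : Fin m → K) : (linF w).IsHomogeneous 1 :=
  MvPolynomial.IsHomogeneous.sum _ _ _ (fun i _ => isHomogeneous_C_mul_X _ _)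

section prodlemmas
variable {α : Type*} [DecidableEq α]

lemma aeval_prod_eq_zero (X : Finset α) (F : α → MvPolynomial (Fin m) K) (x : Fin m → K)
    {u : α} (hu : u ∈ X) (h : aeval x (F u) = 0) :
    aeval x (∏ b ∈ X, F b) = 0 := by
  rw [map_prod]
  exact Finset.prod_eq_zero hu h

lemma aeval_pderiv_prod_eq_zero_of_double (X : Finset α) (F : α → MvPolynomial (Fin m) K)
    (x : Fin m → K) (j : Fin m) {u : α} (hu : u ∈ X) (h0 : aeval x (F u) = 0)
    (h1 : aeval x (pderiv j (F u)) = 0) :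
    aeval x (pderiv j (∏ b ∈ X, F b)) = 0 := by
  rw [← Finset.mul_prod_erase X F hu, pderiv_mul, map_add, map_mul, map_mul, h0, h1]
  ring

lemma aeval_pderiv_prod_eq_zero_of_two (X : Finset α) (F : α → MvPolynomial (Fin m) K)
    (x : Fin m → K) (j : Fin m) {u v : α} (hu : u ∈ X) (hv : v ∈ X) (huv : u ≠ v)
    (h0 : aeval x (F u) = 0) (h1 : aeval x (F v) = 0) :
    aeval x (pderiv j (∏ b ∈ X, F b)) = 0 := by
  have hv' : v ∈ X.erase u := Finset.mem_erase.2 ⟨huv.symm, hv⟩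
  rw [← Finset.mul_prod_erase X F hu, ← Finset.mul_prod_erase _ F hv']
  simp only [pderiv_mul, map_add, map_mul, h0, h1, zero_mul, mul_zero, add_zero]

end prodlemmas

/-- Euler property at every point. -/
def EulerP (f : MvPolynomial (Fin m) K) (k : ℕ) : Prop :=
  ∀ x : Fin m → K, ∑ j, x j * aeval x (pderiv j f) = (k : K) * aeval x f

lemma eulerP_linF (w : Fin m → K) : EulerP (linF w) 1 := by
  intro x
  simp only [pderiv_linF, aeval_C, aeval_linF, algebraMap_eq, Nat.cast_one, one_mul, dotP]
  exact Finset.sum_congr rfl fun i _ => mul_comm _ _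

lemma EulerP.mul {f g : MvPolynomial (Fin m) K} {k l : ℕ} (hf : EulerP f k) (hg : EulerP g l) :
    EulerP (f * g) (k + l) := by
  intro x
  simp only [pderiv_mul, map_add, map_mul]
  have : ∀ j, x j * (aeval x (pderiv j f) * aeval x g + aeval x f * aeval x (pderiv j g))
      = (x j * aeval x (pderiv j f)) * aeval x g + aeval x f * (x j * aeval x (pderiv j g)) :=
    fun j => by ring
  rw [Finset.sum_congr rfl fun j _ => this j, Finset.sum_add_distrib, ← Finset.sum_mul,
    ← Finset.mul_sum, hf x, hg x]
  push_cast
  ring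

lemma EulerP.pow {f : MvPolynomial (Fin m) K} {k : ℕ} (hf : EulerP f k) (t : ℕ) :
    EulerP (f ^ t) (k * t) := by
  induction t with
  | zero => intro x; simp
  | succ t ih =>
      simpa [pow_succ, Nat.mul_succ] using ih.mul hf

lemma EulerP.prod {α : Type*} (X : Finset α) (F : α → MvPolynomial (Fin m) K) (kf : α → ℕ)
    (h : ∀ b ∈ X, EulerP (F b) (kf b)) :
    EulerP (∏ b ∈ X, F b) (∑ b ∈ X, kf b) := by
  classical
  induction X using Finset.induction_on with
  | empty => intro x; simp
  | insert _ _ hnot ih =>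
      rename_i a s
      rw [Finset.prod_insert hnot, Finset.sum_insert hnot]
      exact (h a (Finset.mem_insert_self a s)).mul
        (ih fun b hb => h b (Finset.mem_insert_of_mem hb))

section dual
variable {K : Type} [Field K] {m : ℕ}


/-- separating functional -/
lemma exists_dual_fun {U : Submodule K (Fin m → K)} {p : Fin m → K} (hp : p ∉ U) :
    ∃ w : Fin m → K, (∀ u ∈ U, dotP w u = 0) ∧ dotP w p = 1 := by
  obtain ⟨f, hf0, hfU⟩ := U.exists_dual_map_eq_bot_of_notMem hp inferInstance
  have key : ∀ x : Fin m → K, dotP (fun i => (f p)⁻¹ * f (Pi.single i 1)) x = (f p)⁻¹ * f x := by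
    intro x
    have hx : x = ∑ i, x i • (Pi.single i (1:K) : Fin m → K) := by
      funext j
      simp [Finset.sum_apply, Pi.single_apply]
    calc dotP (fun i => (f p)⁻¹ * f (Pi.single i 1)) x
        = (f p)⁻¹ * ∑ i, x i • f (Pi.single i 1) := by
          simp only [dotP, Finset.mul_sum, smul_eq_mul]; exact Finset.sum_congr rfl fun i _ => by ring
      _ = (f p)⁻¹ * f x := by
          congr 1
          rw [show (∑ i, x i • f (Pi.single i 1)) = f (∑ i, x i • (Pi.single i (1:K) : Fin m → K))
            by rw [map_sum]; exact Finset.sum_congr rfl fun i _ => (map_smul f _ _).symm, ← hx]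
  refine ⟨fun i => (f p)⁻¹ * f (Pi.single i 1), fun u hu => ?_, ?_⟩
  · rw [key]
    have : f u = 0 := by
      have : f u ∈ U.map f := Submodule.mem_map_of_mem hu
      rwa [hfU, Submodule.mem_bot] at this
    simp [this]
  · rw [key, inv_mul_cancel₀ hf0]

lemma finrank_span_pair {x y : Fin m → K} (hx : x ≠ 0) (h : ∀ c : K, c • x ≠ y) :
    finrank K (span K ({x, y} : Set (Fin m → K))) = 2 := by
  classical
  have hli := linearIndepOn_id_pair hx h
  have hxy : x ≠ y := fun hxy => h 1 (by simpa using hxy)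
  rw [finrank_span_set_eq_card hli]
  simp [Set.toFinset_insert, Finset.card_insert_of_notMem, hxy]

lemma finrank_span_pair_le (y z : Fin m → K) :
    finrank K (span K ({y, z} : Set (Fin m → K))) ≤ 2 := by
  classical
  refine le_trans (finrank_span_le_card _) ?_
  refine le_trans (Finset.card_le_card (by simp [Set.subset_toFinset] : Set.toFinset {y, z} ⊆ {y, z})) ?_
  exact Finset.card_insert_le _ _ |>.trans (by simp)

end dual

section comb

variable {α Ω : Type*} [DecidableEq α] [DecidableEq Ω]

lemma comb_pair : ∀ (N : ℕ) (X : Finset α) (w : α → Ω), X.card = 2*N →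
    (∀ b ∈ X, (X.filter (fun c => w c = w b)).card ≤ N) →
    ∃ σ : α → α, ∀ b ∈ X, σ b ∈ X ∧ σ b ≠ b ∧ w (σ b) ≠ w b ∧ σ (σ b) = b := by
  intro N
  induction N with
  | zero =>
      intro X w hcard _
      have : X = ∅ := Finset.card_eq_zero.1 (by omega)
      exact ⟨id, by simp [this]⟩
  | succ N ih =>
      intro X w hcard hfib
      have hne : X.Nonempty := Finset.card_pos.1 (by omega)
      obtain ⟨u, hu, humax⟩ := X.exists_max_image (fun b => (X.filter (fun c => w c = w b)).card) hne
      set Y := X.filter (fun c => w c ≠ w u) with hY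
      have hYcard : Y.card + (X.filter (fun c => w c = w u)).card = X.card := by
        rw [hY, add_comm]
        exact Finset.card_filter_add_card_filter_not _
      have hYne : Y.Nonempty := by
        have := hfib u hu
        refine Finset.card_pos.1 ?_
        omega
      obtain ⟨v, hvY, hvmax⟩ := Y.exists_max_image (fun b => (X.filter (fun c => w c = w b)).card) hYne
      have hvX : v ∈ X := (Finset.mem_filter.1 hvY).1
      have hwvu : w v ≠ w u := (Finset.mem_filter.1 hvY).2
      have huv : u ≠ v := fun h => hwvu (by rw [h])
      set X' := (X.erase u).erase v with hX'
      have hvmem : v ∈ X.erase u := Finset.mem_erase.2 ⟨fun h => hwvu (by rw [h]), hvX⟩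
      have hX'card : X'.card = 2*N := by
        rw [hX', Finset.card_erase_of_mem hvmem, Finset.card_erase_of_mem hu]
        omega
      have hsub : X' ⊆ X := fun x hx =>
        Finset.mem_of_mem_erase (Finset.mem_of_mem_erase hx)
      have hX'u : u ∉ X' := fun h => (Finset.mem_erase.1 (Finset.mem_of_mem_erase h)).1 rfl
      have hX'v : v ∉ X' := fun h => (Finset.mem_erase.1 h).1 rfl
      have hfib' : ∀ b ∈ X', (X'.filter (fun c => w c = w b)).card ≤ N := by
        intro b hb
        have hbX : b ∈ X := hsub hb
        by_cases hbu : w b = w u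
        · have h1 : X'.filter (fun c => w c = w b) ⊆ (X.filter (fun c => w c = w b)).erase u := by
            intro c hc
            rcases Finset.mem_filter.1 hc with ⟨hc1, hc2⟩
            exact Finset.mem_erase.2 ⟨fun h => hX'u (h ▸ hc1), Finset.mem_filter.2 ⟨hsub hc1, hc2⟩⟩
          have h2 : u ∈ X.filter (fun c => w c = w b) := Finset.mem_filter.2 ⟨hu, hbu.symm⟩
          calc (X'.filter (fun c => w c = w b)).card
              ≤ ((X.filter (fun c => w c = w b)).erase u).card := Finset.card_le_card h1
            _ = (X.filter (fun c => w c = w b)).card - 1 := Finset.card_erase_of_mem h2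
            _ ≤ N := by have := hfib b hbX; omega
        by_cases hbv : w b = w v
        · have h1 : X'.filter (fun c => w c = w b) ⊆ (X.filter (fun c => w c = w b)).erase v := by
            intro c hc
            rcases Finset.mem_filter.1 hc with ⟨hc1, hc2⟩
            exact Finset.mem_erase.2 ⟨fun h => hX'v (h ▸ hc1), Finset.mem_filter.2 ⟨hsub hc1, hc2⟩⟩
          have h2 : v ∈ X.filter (fun c => w c = w b) := Finset.mem_filter.2 ⟨hvX, hbv.symm⟩
          calc (X'.filter (fun c => w c = w b)).card
              ≤ ((X.filter (fun c => w c = w b)).erase v).card := Finset.card_le_card h1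
            _ = (X.filter (fun c => w c = w b)).card - 1 := Finset.card_erase_of_mem h2
            _ ≤ N := by have := hfib b hbX; omega
        -- untouched fiber
        by_contra hcon
        push_neg at hcon
        have hbig : N + 1 ≤ (X.filter (fun c => w c = w b)).card := by
          have : X'.filter (fun c => w c = w b) ⊆ X.filter (fun c => w c = w b) :=
            Finset.filter_subset_filter _ hsub
          have := Finset.card_le_card this
          omega
        have hbY : b ∈ Y := Finset.mem_filter.2 ⟨hbX, hbu⟩
        have hv1 : N + 1 ≤ (X.filter (fun c => w c = w v)).card := le_trans hbig (hvmax b hbY)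
        have hu1 : N + 1 ≤ (X.filter (fun c => w c = w u)).card := le_trans hbig (humax b hbX)
        have hsubY : ∀ z, w z ≠ w u →
            X.filter (fun c => w c = w z) ⊆ Y := by
          intro z hz c hc
          rcases Finset.mem_filter.1 hc with ⟨h1, h2⟩
          exact Finset.mem_filter.2 ⟨h1, fun h => hz (h2 ▸ h)⟩
        have hdisj : Disjoint (X.filter (fun c => w c = w v)) (X.filter (fun c => w c = w b)) := by
          rw [Finset.disjoint_left]
          intro c h1 h2
          exact hbv ((Finset.mem_filter.1 h2).2.symm.trans (Finset.mem_filter.1 h1).2)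
        have hcu : ((X.filter (fun c => w c = w v)) ∪ (X.filter (fun c => w c = w b))).card
            = (X.filter (fun c => w c = w v)).card + (X.filter (fun c => w c = w b)).card :=
          Finset.card_union_of_disjoint hdisj
        have hsubU : (X.filter (fun c => w c = w v)) ∪ (X.filter (fun c => w c = w b)) ⊆ Y :=
          Finset.union_subset (hsubY v hwvu) (hsubY b hbu)
        have := Finset.card_le_card hsubU
        omega
      obtain ⟨σ', hσ'⟩ := ih X' w hX'card hfib'
      refine ⟨Function.update (Function.update σ' u v) v u, fun b hb => ?_⟩
      have s1 : Function.update (Function.update σ' u v) v u v = u := Function.update_self _ _ _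
      have s2 : Function.update (Function.update σ' u v) v u u = v := by
        rw [Function.update_of_ne huv, Function.update_self]
      rcases eq_or_ne b v with rfl | hbv'
      · exact ⟨by rw [s1]; exact hu, by rw [s1]; exact huv,
          by rw [s1]; exact fun h => hwvu h.symm, by rw [s1, s2]⟩
      rcases eq_or_ne b u with rfl | hbu'
      · exact ⟨by rw [s2]; exact hvX, by rw [s2]; exact Ne.symm huv,
          by rw [s2]; exact hwvu, by rw [s2, s1]⟩
      · have hbX' : b ∈ X' := Finset.mem_erase.2 ⟨hbv', Finset.mem_erase.2 ⟨hbu', hb⟩⟩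
        obtain ⟨h1, h2, h3, h4⟩ := hσ' b hbX'
        have e1 : σ' b ≠ v := fun h => hX'v (h ▸ h1)
        have e2 : σ' b ≠ u := fun h => hX'u (h ▸ h1)
        rw [Function.update_of_ne hbv', Function.update_of_ne hbu',
          Function.update_of_ne e1, Function.update_of_ne e2, h4]
        exact ⟨hsub h1, h2, h3, rfl⟩

lemma comb_main (X : Finset α) (w : α → Ω) (k : ℕ)
    (hfib : ∀ b ∈ X, (X.filter (fun c => w c = w b)).card ≤ k) :
    ∃ (E : Finset α) (σ : α → α), E ⊆ X ∧
      X.card + E.card ≤ max (2*k) (X.card + X.card % 2) ∧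
      (∀ b ∈ X \ E, σ b ∈ X \ E ∧ σ b ≠ b ∧ w (σ b) ≠ w b ∧ σ (σ b) = b) := by
  rcases X.eq_empty_or_nonempty with rfl | hne
  · exact ⟨∅, id, by simp⟩
  obtain ⟨b₀, hb₀, hmax⟩ := X.exists_max_image (fun b => (X.filter (fun c => w c = w b)).card) hne
  set N := X.card with hN
  set f := (X.filter (fun c => w c = w b₀)).card with hf
  have hfk : f ≤ k := hfib b₀ hb₀
  have hf1 : 1 ≤ f := Finset.card_pos.2 ⟨b₀, Finset.mem_filter.2 ⟨hb₀, rfl⟩⟩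
  have hfN : f ≤ N := Finset.card_le_card (Finset.filter_subset _ _)
  have hm1 : 2*k ≤ max (2*k) (N + N%2) := le_max_left _ _
  have hm2 : N + N%2 ≤ max (2*k) (N + N%2) := le_max_right _ _
  have harith : ∃ t, t ≤ f ∧ 2 * ((N-t)/2) = N - t ∧ N + t ≤ max (2*k) (N + N%2) ∧
      f - t ≤ (N-t)/2 ∧ ∀ g, g ≤ f → g + f ≤ N → g ≤ (N-t)/2 := by
    rcases le_or_gt N (2*f) with h | h
    · exact ⟨2*f - N, by omega, by omega, by omega, by omega, fun g h1 h2 => by omega⟩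
    · exact ⟨N % 2, by omega, by omega, by omega, by omega, fun g h1 h2 => by omega⟩
  obtain ⟨t, htf, hpar, hbnd, htouch, huntouch⟩ := harith
  obtain ⟨E, hEsub, hEcard⟩ := Finset.exists_subset_card_eq
    (show t ≤ (X.filter (fun c => w c = w b₀)).card from htf)
  have hEX : E ⊆ X := hEsub.trans (Finset.filter_subset _ _)
  set X' := X \ E with hX'
  have hX'card : X'.card = N - t := by rw [hX', Finset.card_sdiff_of_subset hEX, hEcard]
  have hfib' : ∀ b ∈ X', (X'.filter (fun c => w c = w b)).card ≤ (N - t)/2 := by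
    intro b hb
    have hbX : b ∈ X := (Finset.mem_sdiff.1 hb).1
    by_cases hbb : w b = w b₀
    · have hsub2 : X'.filter (fun c => w c = w b) ⊆ (X.filter (fun c => w c = w b₀)) \ E := by
        intro c hc
        rcases Finset.mem_filter.1 hc with ⟨hc1, hc2⟩
        rcases Finset.mem_sdiff.1 hc1 with ⟨hc3, hc4⟩
        exact Finset.mem_sdiff.2 ⟨Finset.mem_filter.2 ⟨hc3, hc2.trans hbb⟩, hc4⟩
      have h1 := Finset.card_le_card hsub2
      rw [Finset.card_sdiff_of_subset hEsub, hEcard, ← hf] at h1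
      omega
    · have hdisj : Disjoint (X.filter (fun c => w c = w b)) (X.filter (fun c => w c = w b₀)) := by
        rw [Finset.disjoint_left]
        intro c h1 h2
        exact hbb ((Finset.mem_filter.1 h1).2.symm.trans (Finset.mem_filter.1 h2).2)
      have hcup : (X.filter (fun c => w c = w b)).card + f ≤ N := by
        rw [hf, ← Finset.card_union_of_disjoint hdisj]
        exact Finset.card_le_card (Finset.union_subset (Finset.filter_subset _ _) (Finset.filter_subset _ _))
      have h1 : (X'.filter (fun c => w c = w b)).card ≤ (X.filter (fun c => w c = w b)).card :=
        Finset.card_le_card (Finset.filter_subset_filter _ (Finset.sdiff_subset))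
      have h2 := hmax b hbX
      exact h1.trans (huntouch _ h2 hcup)
  obtain ⟨σ, hσ⟩ := comb_pair ((N - t)/2) X' w (by omega) hfib'
  exact ⟨E, σ, hEX, by omega, hσ⟩

end comb

section dim

variable (K : Type) [Field K]

noncomputable def homogEquiv (m d : ℕ) :
    (homogeneousSubmodule (Fin m) K d) ≃ₗ[K] ({s : Fin m →₀ ℕ | s.degree = d} →₀ K) :=
  (LinearEquiv.ofEq _ _ (homogeneousSubmodule_eq_finsupp_supported (σ := Fin m) (R := K) d)).trans
    (AddMonoidAlgebra.supportedEquivFinsupp _)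

noncomputable def degreeSymEquiv (m d : ℕ) :
    {s : Fin m →₀ ℕ | s.degree = d} ≃ Sym (Fin m) d :=
  (Equiv.subtypeEquivRight (fun s => by
    show s.degree = d ↔ s.sum (fun _ => id) = d
    simp [Finsupp.degree_apply, Finsupp.sum])).trans (Sym.equivNatSum (Fin m) d).symm

noncomputable instance degFintype (m d : ℕ) : Fintype {s : Fin m →₀ ℕ | s.degree = d} :=
  Fintype.ofEquiv _ (degreeSymEquiv m d).symm

lemma card_deg (m d : ℕ) :
    Fintype.card {s : Fin m →₀ ℕ | s.degree = d} = (m + d - 1).choose d := by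
  rw [Fintype.card_congr (degreeSymEquiv m d), Sym.card_sym_eq_choose, Fintype.card_fin]

instance homogFinite (m d : ℕ) : Module.Finite K (homogeneousSubmodule (Fin m) K d) :=
  Module.Finite.equiv ((homogEquiv K m d).trans
    (Finsupp.linearEquivFunOnFinite K K _)).symm

lemma finrank_homog (m d : ℕ) :
    finrank K (homogeneousSubmodule (Fin m) K d) = (m + d - 1).choose d := by
  rw [LinearEquiv.finrank_eq (homogEquiv K m d), finrank_finsupp_self, card_deg]

end dim

section cover
variable {K : Type} [Field K] {n d : ℕ}

lemma cover_exists (hd : 4 ≤ d)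
    (S : Fin ((d + 3) / 2 + 1) → (Fin (n + 1) → K))
    (hS0 : ∀ i, S i ≠ 0)
    (hSd : ∀ i j, i ≠ j → ∀ c : K, S i ≠ c • S j)
    (hncol : ∀ T : Finset (Fin ((d + 3) / 2 + 1)), T.card = (d + 3) / 2 →
      3 ≤ Module.finrank K ↥(Submodule.span K (S '' ↑T)))
    (a : Fin ((d + 3) / 2 + 1)) :
    ∃ (E : Finset (Fin ((d + 3) / 2 + 1))) (τ : Fin ((d + 3) / 2 + 1) → Fin ((d + 3) / 2 + 1)),
      E ⊆ Finset.univ.erase a ∧ (Finset.univ.erase a).card + E.card ≤ d - 1 ∧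
      ∀ b ∈ Finset.univ.erase a \ E,
        τ b ∈ Finset.univ.erase a \ E ∧ τ b ≠ b ∧
        (S a ∉ Submodule.span K ({S b, S (τ b)} : Set (Fin (n+1) → K))) ∧
        ∃ c ∈ Finset.univ.erase a \ E, c ≠ b ∧ τ c = b := by
  classical
  set X := (Finset.univ : Finset (Fin ((d + 3) / 2 + 1))).erase a with hX
  have hXa : ∀ b ∈ X, b ≠ a := fun b hb => (Finset.mem_erase.1 hb).1
  have hXcard : X.card = (d + 3) / 2 := by
    rw [hX, Finset.card_erase_of_mem (Finset.mem_univ a), Finset.card_univ, Fintype.card_fin]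
    omega
  set w : Fin ((d + 3) / 2 + 1) → Submodule K (Fin (n+1) → K) := fun b => Submodule.span K {S a, S b} with hw
  have hW2 : ∀ b, b ≠ a → finrank K (w b) = 2 := by
    intro b hba
    exact finrank_span_pair (hS0 a) (fun c hc => hSd b a hba c (by rw [hc]))
  have hnm : ∀ b c, b ≠ a → c ≠ a → w b ≠ w c →
      S a ∉ Submodule.span K ({S b, S c} : Set (Fin (n+1) → K)) := by
    intro b c hba hca hwbc hmem
    have hsub : ∀ x, x ≠ a → S x ∈ Submodule.span K ({S b, S c} : Set (Fin (n+1) → K)) →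
        w x = Submodule.span K ({S b, S c} : Set (Fin (n+1) → K)) := by
      intro x hxa hx
      refine Submodule.eq_of_le_of_finrank_le ?_ ?_
      · rw [hw]
        refine Submodule.span_le.2 ?_
        rintro y (rfl | hy)
        · exact hmem
        · simp only [Set.mem_singleton_iff] at hy
          exact hy ▸ hx
      · rw [hW2 x hxa]
        exact finrank_span_pair_le _ _
    have h1 := hsub b hba (Submodule.subset_span (Set.mem_insert _ _))
    have h2 := hsub c hca (Submodule.subset_span (Set.mem_insert_of_mem _ rfl))
    exact hwbc (h1.trans h2.symm)
  have hfibB : ∀ b ∈ X, (X.filter (fun c => w c = w b)).card ≤ (d + 3) / 2 - 2 := by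
    intro b hb
    by_contra hcon
    push_neg at hcon
    have haX : a ∉ X := fun h => (Finset.mem_erase.1 h).1 rfl
    have haF : a ∉ X.filter (fun c => w c = w b) := fun h => haX (Finset.filter_subset _ _ h)
    have hcardF : (insert a (X.filter (fun c => w c = w b))).card
        = (X.filter (fun c => w c = w b)).card + 1 := Finset.card_insert_of_notMem haF
    obtain ⟨T, hTsub, hTcard⟩ := Finset.exists_subset_card_eq
      (show (d + 3) / 2 ≤ (insert a (X.filter (fun c => w c = w b))).card by omega)
    have hT3 := hncol T hTcard
    have hle : Submodule.span K (S '' ↑T) ≤ w b := by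
      refine Submodule.span_le.2 ?_
      rintro y ⟨t, ht, rfl⟩
      have ht' := hTsub ht
      rcases Finset.mem_insert.1 ht' with rfl | htF
      · exact Submodule.subset_span (Set.mem_insert _ _)
      · have := (Finset.mem_filter.1 htF).2
        rw [← this]
        exact Submodule.subset_span (Set.mem_insert_of_mem _ rfl)
    have hmono := Submodule.finrank_mono hle
    rw [hW2 b (hXa b hb)] at hmono
    omega
  rcases le_or_gt 5 d with hd5 | hd4
  · obtain ⟨E, σ, hE1, hE2, hσ⟩ := comb_main X w ((d + 3) / 2 - 2) hfibB
    refine ⟨E, σ, hE1, by rw [hXcard] at hE2 ⊢; omega, fun b hb => ?_⟩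
    obtain ⟨h1, h2, h3, h4⟩ := hσ b hb
    have hbX : b ∈ X := (Finset.mem_sdiff.1 hb).1
    have hσX : σ b ∈ X := (Finset.mem_sdiff.1 h1).1
    exact ⟨h1, h2, hnm b (σ b) (hXa b hbX) (hXa _ hσX) (Ne.symm h3), σ b, h1, h2, h4⟩
  · -- d = 4 : triangle
    have hd4' : d = 4 := by omega
    have hX3 : X.card = 3 := by omega
    obtain ⟨b1, b2, b3, h12, h13, h23, hXeq⟩ := Finset.card_eq_three.1 hX3
    have hww : ∀ x y, x ∈ X → y ∈ X → x ≠ y → w x ≠ w y := by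
      intro x y hx hy hxy heq
      have hpair : ({x, y} : Finset (Fin ((d + 3) / 2 + 1))) ⊆ X.filter (fun c => w c = w x) := by
        intro z hz
        rcases Finset.mem_insert.1 hz with rfl | hz'
        · exact Finset.mem_filter.2 ⟨hx, rfl⟩
        · rw [Finset.mem_singleton.1 hz']
          exact Finset.mem_filter.2 ⟨hy, heq.symm⟩
      have := Finset.card_le_card hpair
      rw [Finset.card_pair hxy] at this
      have := hfibB x hx
      omega
    have m1 : b1 ∈ X := by rw [hXeq]; simp
    have m2 : b2 ∈ X := by rw [hXeq]; simp
    have m3 : b3 ∈ X := by rw [hXeq]; simp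
    set τ : Fin ((d + 3) / 2 + 1) → Fin ((d + 3) / 2 + 1) := fun x => if x = b1 then b2 else if x = b2 then b3 else b1 with hτ
    have t1 : τ b1 = b2 := by simp [hτ]
    have t2 : τ b2 = b3 := by simp [hτ, Ne.symm h12]
    have t3 : τ b3 = b1 := by simp [hτ, Ne.symm h13, Ne.symm h23]
    refine ⟨∅, τ, Finset.empty_subset _, by simp only [Finset.card_empty]; omega, fun b hb => ?_⟩
    rw [Finset.sdiff_empty] at hb ⊢
    have hcases : b = b1 ∨ b = b2 ∨ b = b3 := by
      have := hb; rw [hXeq] at this; simpa using this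
    rcases hcases with rfl | rfl | rfl
    · rw [t1]
      exact ⟨m2, Ne.symm h12, hnm _ _ (hXa _ m1) (hXa _ m2) (hww _ _ m1 m2 h12),
        b3, m3, Ne.symm h13, t3⟩
    · rw [t2]
      exact ⟨m3, Ne.symm h23, hnm _ _ (hXa _ m2) (hXa _ m3) (hww _ _ m2 m3 h23),
        b1, m1, h12, t1⟩
    · rw [t3]
      exact ⟨m1, h13, hnm _ _ (hXa _ m3) (hXa _ m1) (hww _ _ m3 m1 (Ne.symm h13)),
        b2, m2, h23, t2⟩

end cover

section block
variable {K : Type} [Field K] [CharZero K] {n d : ℕ}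

lemma block_exists (hd : 4 ≤ d)
    (S : Fin ((d + 3) / 2 + 1) → (Fin (n + 1) → K))
    (hS0 : ∀ i, S i ≠ 0)
    (hSd : ∀ i j, i ≠ j → ∀ c : K, S i ≠ c • S j)
    (hncol : ∀ T : Finset (Fin ((d + 3) / 2 + 1)), T.card = (d + 3) / 2 →
      3 ≤ Module.finrank K ↥(Submodule.span K (S '' ↑T)))
    (a : Fin ((d + 3) / 2 + 1)) (v : Fin (n + 1) → K) :
    ∃ f : MvPolynomial (Fin (n + 1)) K, f.IsHomogeneous d ∧
      (∀ b, b ≠ a → ∀ j, aeval (S b) (pderiv j f) = 0) ∧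
      (∀ j, aeval (S a) (pderiv j f) = v j) := by
  classical
  obtain ⟨E, τ, hE, hdeg, hcov⟩ := cover_exists hd S hS0 hSd hncol a
  set X := (Finset.univ : Finset (Fin ((d + 3) / 2 + 1))).erase a with hX
  have hXa : ∀ b ∈ X, b ≠ a := fun b hb => (Finset.mem_erase.1 hb).1
  set mb : Fin ((d + 3) / 2 + 1) → ℕ := fun b => if b ∈ E then 2 else 1 with hmb
  have hgex : ∀ b : Fin ((d + 3) / 2 + 1), ∃ gb : Fin (n + 1) → K,
      (b ∈ X → dotP gb (S b) = 0 ∧ dotP gb (S a) = 1) ∧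
      (b ∈ X \ E → dotP gb (S (τ b)) = 0) := by
    intro b
    by_cases hbX : b ∈ X
    · by_cases hbE : b ∈ E
      · have hna : S a ∉ Submodule.span K ({S b} : Set (Fin (n+1) → K)) := by
          rw [Submodule.mem_span_singleton]
          rintro ⟨c, hc⟩
          exact hSd a b (Ne.symm (hXa b hbX)) c hc.symm
        obtain ⟨gb, hg1, hg2⟩ := exists_dual_fun hna
        exact ⟨gb, fun _ => ⟨hg1 _ (Submodule.subset_span rfl), hg2⟩,
          fun hmem => absurd hbE (Finset.mem_sdiff.1 hmem).2⟩
      · have hbXE : b ∈ X \ E := Finset.mem_sdiff.2 ⟨hbX, hbE⟩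
        obtain ⟨_, _, hnotmem, _⟩ := hcov b hbXE
        obtain ⟨gb, hg1, hg2⟩ := exists_dual_fun hnotmem
        exact ⟨gb, fun _ => ⟨hg1 _ (Submodule.subset_span (Set.mem_insert _ _)), hg2⟩,
          fun _ => hg1 _ (Submodule.subset_span (Set.mem_insert_of_mem _ rfl))⟩
    · exact ⟨0, fun h => absurd h hbX, fun h => absurd (Finset.mem_sdiff.1 h).1 hbX⟩
  choose g hg1 hg2 using hgex
  set F : Fin ((d + 3) / 2 + 1) → MvPolynomial (Fin (n + 1)) K :=
    fun b => (linF (g b)) ^ (mb b) with hF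
  set Q := ∏ b ∈ X, F b with hQ
  set M := ∑ b ∈ X, mb b with hM
  have hMcard : M = X.card + E.card := by
    rw [hM]
    have : ∀ b ∈ X, mb b = 1 + (if b ∈ E then 1 else 0) := by
      intro b _; rw [hmb]; dsimp only; split <;> rfl
    rw [Finset.sum_congr rfl this, Finset.sum_add_distrib, Finset.sum_const, Finset.sum_ite_mem]
    have hXE : X ∩ E = E := Finset.inter_eq_right.2 hE
    simp [hXE]
  have hMd : M ≤ d - 1 := by rw [hMcard]; exact hdeg
  have hmb1 : ∀ b, 1 ≤ mb b := by intro b; rw [hmb]; dsimp only; split <;> omega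
  have hQhom : Q.IsHomogeneous M := by
    rw [hQ, hM]
    refine MvPolynomial.IsHomogeneous.prod X F mb (fun b _ => ?_)
    have := (isHomogeneous_linF (g b)).pow (mb b)
    rwa [one_mul] at this
  have hQa : aeval (S a) Q ≠ 0 := by
    rw [hQ, map_prod]
    refine Finset.prod_ne_zero_iff.2 (fun b hb => ?_)
    rw [hF]; dsimp only
    rw [map_pow, aeval_linF, (hg1 b hb).2, one_pow]
    exact one_ne_zero
  have hFb0 : ∀ b ∈ X, aeval (S b) (F b) = 0 := by
    intro b hb
    rw [hF]; dsimp only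
    rw [map_pow, aeval_linF, (hg1 b hb).1, zero_pow (by have := hmb1 b; omega)]
  have hQb0 : ∀ b ∈ X, aeval (S b) Q = 0 := fun b hb =>
    aeval_prod_eq_zero X F _ hb (hFb0 b hb)
  have hQb1 : ∀ b ∈ X, ∀ j, aeval (S b) (pderiv j Q) = 0 := by
    intro b hb j
    by_cases hbE : b ∈ E
    · refine aeval_pderiv_prod_eq_zero_of_double X F _ j hb (hFb0 b hb) ?_
      have hmb2 : F b = linF (g b) * linF (g b) := by
        rw [hF]; dsimp only; rw [hmb]; dsimp only; rw [if_pos hbE, sq]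
      rw [hmb2, pderiv_mul]
      simp only [map_add, map_mul, pderiv_linF, aeval_linF, (hg1 b hb).1, mul_zero, zero_mul, add_zero]
    · have hbXE : b ∈ X \ E := Finset.mem_sdiff.2 ⟨hb, hbE⟩
      obtain ⟨c, hcXE, hcb, hτc⟩ := (hcov b hbXE).2.2.2
      have hcX : c ∈ X := (Finset.mem_sdiff.1 hcXE).1
      refine aeval_pderiv_prod_eq_zero_of_two X F _ j hb hcX (Ne.symm hcb) (hFb0 b hb) ?_
      have := hg2 c hcXE
      rw [hτc] at this
      rw [hF]; dsimp only
      rw [map_pow, aeval_linF, this, zero_pow (by have := hmb1 c; omega)]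
  obtain ⟨i0, hi0⟩ : ∃ i, S a i ≠ 0 := by
    by_contra h; push_neg at h; exact hS0 a (funext h)
  set u₀ : Fin (n + 1) → K := Pi.single i0 (S a i0)⁻¹ with hu₀def
  have hu₀ : dotP u₀ (S a) = 1 := by
    rw [dotP, Finset.sum_eq_single i0]
    · rw [hu₀def, Pi.single_eq_same, inv_mul_cancel₀ hi0]
    · intro i _ hii; rw [hu₀def, Pi.single_eq_of_ne hii, zero_mul]
    · intro h; exact absurd (Finset.mem_univ i0) h
  set A := Q * (linF u₀) ^ (d - 1 - M) with hA
  have hAa : aeval (S a) A = aeval (S a) Q := by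
    rw [hA, map_mul, map_pow, aeval_linF, hu₀, one_pow, mul_one]
  set α := aeval (S a) Q with hα
  set F₀ := A * linF u₀ with hF₀
  have hF₀a : aeval (S a) F₀ = α := by
    rw [hF₀, map_mul, aeval_linF, hu₀, mul_one, hAa]
  have hQE : EulerP Q M := by
    rw [hQ, hM]
    refine EulerP.prod X F mb (fun b _ => ?_)
    have := (eulerP_linF (g b)).pow (mb b)
    rwa [one_mul] at this
  have hAE : EulerP A (M + 1 * (d - 1 - M)) := hQE.mul ((eulerP_linF u₀).pow _)
  have hFE : EulerP F₀ (M + 1 * (d - 1 - M) + 1) := hAE.mul (eulerP_linF u₀)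
  have hdeq : M + 1 * (d - 1 - M) + 1 = d := by omega
  set g₀ : Fin (n + 1) → K := fun j => aeval (S a) (pderiv j F₀) with hg₀
  have heuler : ∑ j, S a j * g₀ j = (d : K) * α := by
    have := hFE (S a)
    rw [hdeq] at this
    rw [hg₀]; dsimp only
    rw [this, hF₀a]
  have hα0 : α ≠ 0 := hQa
  have hdK : ((d : K) * α) ≠ 0 :=
    mul_ne_zero (Nat.cast_ne_zero.2 (by omega)) hα0
  set τc := (∑ j, v j * S a j) / ((d : K) * α) with hτc
  set v' : Fin (n + 1) → K := fun j => v j - τc * g₀ j with hv'def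
  have hv' : dotP v' (S a) = 0 := by
    rw [dotP]
    have : ∀ j, v' j * S a j = v j * S a j - τc * (S a j * g₀ j) := by
      intro j; rw [hv'def]; ring
    rw [Finset.sum_congr rfl (fun j _ => this j), Finset.sum_sub_distrib, ← Finset.mul_sum,
      heuler, hτc, div_mul_cancel₀ _ hdK, sub_self]
  set f := α⁻¹ • (A * linF v') + τc • F₀ with hf
  have hhomA : (A * linF v').IsHomogeneous d := by
    have h1 : A.IsHomogeneous (M + 1 * (d - 1 - M)) := by
      rw [hA]
      exact hQhom.mul ((isHomogeneous_linF u₀).pow _)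
    have h2 := h1.mul (isHomogeneous_linF v')
    rwa [hdeq] at h2
  have hhomF₀ : F₀.IsHomogeneous d := by
    have h1 : A.IsHomogeneous (M + 1 * (d - 1 - M)) := by
      rw [hA]
      exact hQhom.mul ((isHomogeneous_linF u₀).pow _)
    have h2 := h1.mul (isHomogeneous_linF u₀)
    rwa [hdeq] at h2
  have hfhom : f.IsHomogeneous d := by
    rw [hf]
    have m1 : α⁻¹ • (A * linF v') ∈ homogeneousSubmodule (Fin (n+1)) K d :=
      Submodule.smul_mem _ _ ((mem_homogeneousSubmodule _ _).2 hhomA)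
    have m2 : τc • F₀ ∈ homogeneousSubmodule (Fin (n+1)) K d :=
      Submodule.smul_mem _ _ ((mem_homogeneousSubmodule _ _).2 hhomF₀)
    exact (mem_homogeneousSubmodule _ _).1 (Submodule.add_mem _ m1 m2)
  have hkill : ∀ (W : MvPolynomial (Fin (n + 1)) K), ∀ b ∈ X, ∀ j,
      aeval (S b) (pderiv j (Q * W)) = 0 := by
    intro W b hb j
    rw [pderiv_mul, map_add, map_mul, map_mul, hQb0 b hb, hQb1 b hb j]
    ring
  refine ⟨f, hfhom, ?_, ?_⟩
  · intro b hba j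
    have hbX : b ∈ X := Finset.mem_erase.2 ⟨hba, Finset.mem_univ b⟩
    have e1 : aeval (S b) (pderiv j (A * linF v')) = 0 := by
      have : A * linF v' = Q * ((linF u₀) ^ (d - 1 - M) * linF v') := by
        rw [hA, mul_assoc]
      rw [this]
      exact hkill _ b hbX j
    have e2 : aeval (S b) (pderiv j F₀) = 0 := by
      have : F₀ = Q * ((linF u₀) ^ (d - 1 - M) * linF u₀) := by
        rw [hF₀, hA, mul_assoc]
      rw [this]
      exact hkill _ b hbX j
    rw [hf]
    simp only [map_add, Derivation.map_smul, map_smul, e1, e2, smul_zero, add_zero]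
  · intro j
    have e1 : aeval (S a) (pderiv j (A * linF v')) = α * v' j := by
      simp only [pderiv_mul, map_add, map_mul, pderiv_linF, aeval_C, aeval_linF, hv', hAa,
        mul_zero, zero_add, Algebra.algebraMap_self_apply]
    have : aeval (S a) (pderiv j f) = α⁻¹ * (α * v' j) + τc * g₀ j := by
      rw [hf]
      simp only [map_add, Derivation.map_smul, map_smul, smul_eq_mul, e1, hg₀]
    rw [this, ← mul_assoc, inv_mul_cancel₀ hα0, one_mul, hv'def]
    ring

end block

/-- Homogeneous forms of degree `d` in `N` variables all of whose first-order partial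
derivatives vanish at every point of the family `p`. -/
noncomputable def dblVanish (K : Type) [Field K] (N d : ℕ) {ι : Type} (p : ι → (Fin N → K)) :
    Submodule K (MvPolynomial (Fin N) K) :=
  homogeneousSubmodule (Fin N) K d ⊓
    ⨅ (a : ι) (i : Fin N),
      LinearMap.ker ((aeval (p a)).toLinearMap ∘ₗ (pderiv i).toLinearMap)

/-- **Second Terracini locus of Veronese varieties: non-membership.**  Let `n ≥ 2`, `d ≥ 4` and
`r = ⌈(d+2)/2⌉ + 1 = (d+3)/2 + 1` (integer division).  If `S` is a set of `r` distinct points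
of `ℙⁿ` such that no `r - 1` of them are collinear, then the double points `2S` impose
independent conditions on degree-`d` forms: the space of degree-`d` forms singular at every
point of `S` has dimension exactly `C(n + d, n) - r (n + 1)`, i.e. `ν_d(S) ∉ Ter_r(Vₙᵈ)`. -/
theorem second_veronese_terracini_noncollinear
    {K : Type} [Field K] [IsAlgClosed K] [CharZero K]
    (n d : ℕ) (hn : 2 ≤ n) (hd : 4 ≤ d)
    (S : Fin ((d + 3) / 2 + 1) → (Fin (n + 1) → K))
    (hS0 : ∀ i, S i ≠ 0)
    (hSd : ∀ i j, i ≠ j → ∀ c : K, S i ≠ c • S j)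
    (hncol : ∀ T : Finset (Fin ((d + 3) / 2 + 1)), T.card = (d + 3) / 2 →
      3 ≤ Module.finrank K ↥(Submodule.span K (S '' ↑T))) :
    Module.finrank K ↥(dblVanish K (n + 1) d S) + ((d + 3) / 2 + 1) * (n + 1)
      = Nat.choose (n + d) n := by
  classical
  set V := homogeneousSubmodule (Fin (n + 1)) K d with hV
  set Φ : V →ₗ[K] ((Fin ((d + 3) / 2 + 1) × Fin (n + 1)) → K) :=
    LinearMap.pi (fun ai => ((aeval (S ai.1)).toLinearMap ∘ₗ (pderiv ai.2).toLinearMap) ∘ₗ V.subtype)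
    with hΦ
  have hΦap : ∀ (g : V) (ai : Fin ((d + 3) / 2 + 1) × Fin (n + 1)),
      Φ g ai = aeval (S ai.1) (pderiv ai.2 (g : MvPolynomial (Fin (n + 1)) K)) := by
    intro g ai
    rw [hΦ, LinearMap.pi_apply]
    rfl
  -- step 1 : dblVanish is the kernel
  have step1 : dblVanish K (n + 1) d S = (LinearMap.ker Φ).map V.subtype := by
    ext f
    constructor
    · intro hf
      rw [dblVanish, Submodule.mem_inf] at hf
      obtain ⟨hf1, hf2⟩ := hf
      refine Submodule.mem_map.2 ⟨⟨f, hf1⟩, ?_, rfl⟩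
      rw [LinearMap.mem_ker]
      funext ai
      rw [hΦap]
      simp only [Submodule.mem_iInf] at hf2
      have := hf2 ai.1 ai.2
      rw [LinearMap.mem_ker] at this
      exact this
    · intro hf
      obtain ⟨g, hg, rfl⟩ := Submodule.mem_map.1 hf
      rw [LinearMap.mem_ker] at hg
      rw [dblVanish, Submodule.mem_inf]
      refine ⟨g.2, ?_⟩
      simp only [Submodule.mem_iInf]
      intro a i
      rw [LinearMap.mem_ker]
      have := congrFun hg (a, i)
      rw [hΦap] at this
      exact this
  -- step 3 : surjectivity
  have step3 : LinearMap.range Φ = ⊤ := by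
    rw [eq_top_iff]
    intro y _
    have hy : y = ∑ ai, Pi.single ai (y ai) := by
      funext z
      rw [Finset.sum_apply, Finset.sum_eq_single z]
      · rw [Pi.single_eq_same]
      · intro i _ hiz
        rw [Pi.single_apply, if_neg (Ne.symm hiz)]
      · intro h; exact absurd (Finset.mem_univ z) h
    rw [hy]
    refine Submodule.sum_mem _ (fun ai _ => ?_)
    obtain ⟨f, hfh, h0, h1⟩ := block_exists hd S hS0 hSd hncol ai.1 (Pi.single ai.2 (y ai))
    refine ⟨⟨f, (mem_homogeneousSubmodule _ _).2 hfh⟩, ?_⟩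
    funext bj
    rw [hΦap]
    rcases eq_or_ne bj.1 ai.1 with hba | hba
    · have h1' := h1 bj.2
      rw [hba, h1']
      rw [Pi.single_apply, Pi.single_apply]
      have : (bj = ai) ↔ (bj.2 = ai.2) := by
        constructor
        · intro h; rw [h]
        · intro h; exact Prod.ext hba h
      by_cases hj : bj.2 = ai.2
      · rw [if_pos hj, if_pos (this.2 hj)]
      · rw [if_neg hj, if_neg (fun h => hj (this.1 h))]
    · rw [h0 bj.1 hba bj.2, Pi.single_apply, if_neg (fun h => hba (by rw [h]))]
  -- assemble
  have step2 : finrank K (dblVanish K (n + 1) d S) = finrank K (LinearMap.ker Φ) := by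
    rw [step1]
    exact Submodule.finrank_map_subtype_eq _ _
  have hrn := LinearMap.finrank_range_add_finrank_ker Φ
  have hrange : finrank K (LinearMap.range Φ) = ((d + 3) / 2 + 1) * (n + 1) := by
    rw [step3, finrank_top, Module.finrank_pi, Fintype.card_prod, Fintype.card_fin,
      Fintype.card_fin]
  have hVrank : finrank K V = (n + d).choose n := by
    rw [hV, finrank_homog]
    have e1 : n + 1 + d - 1 = n + d := by omega
    rw [e1]
    have e2 : (n + d) - d = n := by omega
    rw [← Nat.choose_symm (by omega : d ≤ n + d), e2]
  rw [step2]
  omega
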